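/- Let κ be an infinite cardinal and let T = {0,1}^κ with the lexicographic order. Then every well-ordered subset of T has cardinality at most κ, and every reversely well-ordered subset of T has cardinality at most κ. -/

import Mathlib

open Cardinal Set Ordinal

universe u

theorem keyLemma : ∀ o : Ordinal.{u}, ∀ (ι : Type u) (_ : LinearOrder ι) (_ : WellFoundedLT ι),
    type ((· < ·) : ι → ι → Prop) ≤ o → ∀ S : Set (Lex (ι → Bool)),
    S.WellFoundedOn (· < ·) → #S ≤ o.card + ℵ₀ := by
  intro o
  induction o using Ordinal.induction with
  | h o IH =>
  intro ι _ _ hty S hS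
  classical
  rcases isEmpty_or_nonempty ι with hι | hι
  · have h1 : #S ≤ 1 := Cardinal.mk_le_one_iff_set_subsingleton.2 fun a _ b _ =>
      funext fun i => (IsEmpty.false i).elim
    exact h1.trans (one_le_aleph0.trans le_add_self)
  have hwfT : WellFounded ((· < ·) : S → S → Prop) := hS
  have exSucc : ∀ f : S, (∃ g : S, f < g) → ∃ g : S, f < g ∧ ∀ h : S, f < h → g ≤ h := by
    intro f hf
    exact ⟨hwfT.min {g | f < g} hf, hwfT.min_mem _ hf,
      fun h hh => not_lt.1 (hwfT.not_lt_min _ hh)⟩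
  choose! succ hsucc1 hsucc2 using exSucc
  have exD : ∀ f : S, (∃ g : S, f < g) →
      ∃ i : ι, ofLex (f : Lex (ι → Bool)) i = false ∧
        ofLex ((succ f : S) : Lex (ι → Bool)) i = true ∧
        ∀ j, j < i → ofLex (f : Lex (ι → Bool)) j = ofLex ((succ f : S) : Lex (ι → Bool)) j := by
    intro f hf
    have hlt : Pi.Lex (· < ·) (fun {_} => (· < ·)) (ofLex (f : Lex (ι → Bool)))
        (ofLex ((succ f : S) : Lex (ι → Bool))) := hsucc1 f hf
    obtain ⟨i, hagree, hi⟩ := hlt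
    rw [Bool.lt_iff] at hi
    exact ⟨i, hi.1, hi.2, hagree⟩
  choose! D hDf hDs hDa using exD
  -- key comparison lemma
  have key : ∀ f g : S, (∃ x, f < x) → (∃ x, g < x) → D f = D g → f < g →
      ∃ ε, ε < D f ∧ ofLex (f : Lex (ι → Bool)) ε = false ∧
        ofLex (g : Lex (ι → Bool)) ε = true ∧
        ∀ j, j < ε → ofLex (f : Lex (ι → Bool)) j = ofLex (g : Lex (ι → Bool)) j := by
    intro f g hf hg hDfg hlt
    have hlt' : Pi.Lex (· < ·) (fun {_} => (· < ·)) (ofLex (f : Lex (ι → Bool)))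
        (ofLex (g : Lex (ι → Bool))) := hlt
    obtain ⟨ε, hagree, hε⟩ := hlt'
    rw [Bool.lt_iff] at hε
    refine ⟨ε, ?_, hε.1, hε.2, hagree⟩
    rcases lt_trichotomy ε (D f) with h | h | h
    · exact h
    · exfalso
      rw [h, hDfg] at hε
      rw [hDf g hg] at hε
      exact Bool.false_ne_true hε.2
    · exfalso
      -- then g < succ f, contradicting succ f ≤ g
      have hgs : Pi.Lex (· < ·) (fun {_} => (· < ·)) (ofLex (g : Lex (ι → Bool)))
          (ofLex ((succ f : S) : Lex (ι → Bool))) := by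
        refine ⟨D f, fun j hj => ?_, ?_⟩
        · show ofLex (g : Lex (ι → Bool)) j = ofLex ((succ f : S) : Lex (ι → Bool)) j
          rw [← hagree j (hj.trans h), hDa f hf j hj]
        · show ofLex (g : Lex (ι → Bool)) (D f) < ofLex ((succ f : S) : Lex (ι → Bool)) (D f)
          rw [← hagree (D f) h, hDf f hf, hDs f hf]
          exact Bool.false_lt_true
      have hgs' : g < succ f := hgs
      exact absurd (hsucc2 f hf g hlt) (not_le.2 hgs')
  -- bound the fibers
  have bound : ∀ δ : ι, #({f : S | (∃ x, f < x) ∧ D f = δ}) ≤ o.card + ℵ₀ := by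
    intro δ
    set ι' := {j : ι // j < δ} with hι'
    set ρ : S → Lex (ι' → Bool) := fun f => toLex fun j => ofLex (f : Lex (ι → Bool)) j.val
      with hρ
    set A : Set S := {f : S | (∃ x, f < x) ∧ D f = δ} with hA
    have hmono : ∀ f ∈ A, ∀ g ∈ A, f < g → ρ f < ρ g := by
      intro f hf g hg hlt
      obtain ⟨ε, hεδ, h1, h2, h3⟩ := key f g hf.1 hg.1 (hf.2.trans hg.2.symm) hlt
      have hεδ' : ε < δ := hf.2 ▸ hεδ
      exact ⟨⟨ε, hεδ'⟩, fun j hj => h3 j.val hj, by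
        show ofLex (f : Lex (ι → Bool)) ε < ofLex (g : Lex (ι → Bool)) ε
        rw [h1, h2]; exact Bool.false_lt_true⟩
    have hinj : InjOn ρ A := by
      intro f hf g hg h
      by_contra hne
      rcases Ne.lt_or_gt hne with hc | hc
      · exact absurd (hmono _ hf _ hg hc) (h ▸ lt_irrefl _)
      · exact absurd (hmono _ hg _ hf hc) (h ▸ lt_irrefl _)
    have hwfB : (ρ '' A).WellFoundedOn (· < ·) := by
      rw [Set.wellFoundedOn_image]
      have hAwf : A.WellFoundedOn ((· < ·) : S → S → Prop) := hwfT.wellFoundedOn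
      refine Subrelation.wf (r := fun a b : A => (a : S) < (b : S)) ?_ hAwf
      intro a b hab
      rcases lt_trichotomy (a : S) (b : S) with hc | hc | hc
      · exact hc
      · exact absurd hab (by show ¬ ρ a.1 < ρ b.1; rw [hc]; exact lt_irrefl _)
      · exact absurd (hmono _ b.2 _ a.2 hc) (asymm hab)
    have hty' : type ((· < ·) : ι' → ι' → Prop) < o :=
      lt_of_lt_of_le (PrincipalSeg.ofElement ((· < ·) : ι → ι → Prop) δ).ordinal_type_lt hty
    have hIH := IH _ hty' ι' inferInstance inferInstance le_rfl (ρ '' A) hwfB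
    calc #A = #(ρ '' A) := (mk_image_eq_of_injOn _ _ hinj).symm
      _ ≤ (type ((· < ·) : ι' → ι' → Prop)).card + ℵ₀ := hIH
      _ ≤ o.card + ℵ₀ := by
          gcongr
  -- assemble
  have cover : (univ : Set S) ⊆
      {f : S | ∀ g, ¬ f < g} ∪ ⋃ δ : ι, {f : S | (∃ x, f < x) ∧ D f = δ} := by
    intro f _
    by_cases h : ∃ g : S, f < g
    · exact Or.inr (mem_iUnion.2 ⟨D f, h, rfl⟩)
    · exact Or.inl fun g hg => h ⟨g, hg⟩
  have hmax : #({f : S | ∀ g, ¬ f < g}) ≤ 1 := by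
    rw [Cardinal.mk_le_one_iff_set_subsingleton]
    intro a ha b hb
    exact le_antisymm (not_lt.1 (hb a)) (not_lt.1 (ha b))
  have hcard : #ι ≤ o.card := by
    rw [← Ordinal.card_type ((· < ·) : ι → ι → Prop)]
    exact Ordinal.card_le_card hty
  have hb0 : ℵ₀ ≤ o.card + ℵ₀ := le_add_self
  calc #S = #(univ : Set S) := mk_univ.symm
    _ ≤ #(({f : S | ∀ g, ¬ f < g} ∪ ⋃ δ : ι, {f : S | (∃ x, f < x) ∧ D f = δ} : Set S)) :=
        mk_le_mk_of_subset cover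
    _ ≤ #({f : S | ∀ g, ¬ f < g}) + #(⋃ δ : ι, {f : S | (∃ x, f < x) ∧ D f = δ}) :=
        mk_union_le _ _
    _ ≤ 1 + #ι * ⨆ δ : ι, #({f : S | (∃ x, f < x) ∧ D f = δ}) :=
        add_le_add hmax (mk_iUnion_le _)
    _ ≤ 1 + (o.card + ℵ₀) * (o.card + ℵ₀) := by
        gcongr
        · exact hcard.trans le_self_add
        · exact ciSup_le' bound
    _ = 1 + (o.card + ℵ₀) := by rw [Cardinal.mul_eq_self hb0]
    _ ≤ (o.card + ℵ₀) + (o.card + ℵ₀) := by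
        gcongr
        exact one_le_aleph0.trans hb0
    _ = o.card + ℵ₀ := Cardinal.add_eq_self hb0

theorem stmt6 (κ : Cardinal.{u}) (hκ : Cardinal.aleph0 ≤ κ) :
    (∀ S : Set (Lex (κ.ord.ToType → Bool)), S.WellFoundedOn (· < ·) → #S ≤ κ) ∧
    (∀ S : Set (Lex (κ.ord.ToType → Bool)), S.WellFoundedOn (· > ·) → #S ≤ κ) := by
  have main : ∀ S : Set (Lex (κ.ord.ToType → Bool)), S.WellFoundedOn (· < ·) → #S ≤ κ := by
    intro S hS
    have h := keyLemma κ.ord κ.ord.ToType inferInstance inferInstance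
      (le_of_eq (type_toType _)) S hS
    rwa [Cardinal.card_ord, Cardinal.add_eq_left hκ hκ] at h
  refine ⟨main, ?_⟩
  intro S hS
  set N : Lex (κ.ord.ToType → Bool) → Lex (κ.ord.ToType → Bool) :=
    fun f => toLex fun i => !(ofLex f i) with hN
  have hNN : ∀ f, N (N f) = f := fun f => funext fun i => Bool.not_not _
  have hanti : ∀ f g : Lex (κ.ord.ToType → Bool), f < g → N g < N f := by
    intro f g h
    obtain ⟨i, hagree, hi⟩ :=
      (h : Pi.Lex (· < ·) (fun {_} => (· < ·)) (ofLex f) (ofLex g))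
    rw [Bool.lt_iff] at hi
    refine ⟨i, fun j hj => ?_, ?_⟩
    · exact congrArg Bool.not (hagree j hj).symm
    · show (!(ofLex g i)) < (!(ofLex f i))
      rw [show ofLex g i = true from hi.2, show ofLex f i = false from hi.1]
      exact Bool.false_lt_true
  have h1 : (N '' S).WellFoundedOn (· < ·) := by
    rw [Set.wellFoundedOn_image]
    refine Subrelation.wf (r := fun a b : S => (b : Lex (κ.ord.ToType → Bool)) < (a : _)) ?_ hS
    intro a b hab
    rcases lt_trichotomy (b : Lex (κ.ord.ToType → Bool)) (a : _) with hc | hc | hc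
    · exact hc
    · exact absurd hab (by show ¬ N a.1 < N b.1; rw [hc]; exact lt_irrefl _)
    · exact absurd (hanti _ _ hc) (asymm hab)
  have h2 := main (N '' S) h1
  rwa [mk_image_eq (Function.LeftInverse.injective hNN)] at h2
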